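/- For every integer j ≥ 1, every integer n with 0 ≤ n ≤ j−1, and every integer x with 0 ≤ x ≤ j−1, the following identity of terminating hypergeometric series holds: j·₃F₂(−n, n, −x−1; 1/2, −j; 1) = (x+1)·₃F₂(−n, n, −x; 1/2, −j+1; 1) − (x−j+1)·₃F₂(−n, n, −x−1; 1/2, −j+1; 1). -/

import Mathlib

/-- The Pochhammer symbol `(a)_k = a (a+1) ⋯ (a+k-1)`. -/
noncomputable def poch (a : ℝ) (k : ℕ) : ℝ := ∏ i ∈ Finset.range k, (a + i)

/-- The terminating hypergeometric series
`₃F₂(−n, a, b; c, d; 1) = ∑_{k=0}^n (−n)_k (a)_k (b)_k / ((c)_k (d)_k k!)`. -/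
noncomputable def hyp3F2 (n : ℕ) (a b c d : ℝ) : ℝ :=
  ∑ k ∈ Finset.range (n + 1),
    poch (-(n : ℝ)) k * poch a k * poch b k / (poch c k * poch d k * (Nat.factorial k : ℝ))

lemma poch_succ (a : ℝ) (k : ℕ) : poch a (k+1) = poch a k * (a + k) :=
  Finset.prod_range_succ _ _

lemma poch_succ' (a : ℝ) (k : ℕ) : poch a (k+1) = a * poch (a+1) k := by
  unfold poch
  rw [Finset.prod_range_succ']
  simp only [Nat.cast_zero, add_zero, mul_comm]
  congr 1
  apply Finset.prod_congr rfl
  intro i _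
  push_cast
  ring

lemma poch_shift (a : ℝ) (k : ℕ) : a * poch (a+1) k = (a + k) * poch a k := by
  have h1 := poch_succ a k
  have h2 := poch_succ' a k
  linear_combination h1 - h2

lemma poch_half_ne (k : ℕ) : poch (1/2 : ℝ) k ≠ 0 := by
  unfold poch
  apply Finset.prod_ne_zero_iff.mpr
  intro i _
  positivity

lemma poch_negj_ne (j k : ℕ) (hk : k ≤ j) : poch (-(j:ℝ)) k ≠ 0 := by
  unfold poch
  apply Finset.prod_ne_zero_iff.mpr
  intro i hi
  simp only [Finset.mem_range] at hi
  have : i < j := lt_of_lt_of_le hi hk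
  have : (i : ℝ) < j := by exact_mod_cast this
  intro h; linarith

lemma poch_negj1_ne (j k : ℕ) (hk : k < j) : poch (-(j:ℝ)+1) k ≠ 0 := by
  unfold poch
  apply Finset.prod_ne_zero_iff.mpr
  intro i hi
  simp only [Finset.mem_range] at hi
  have : (i : ℝ) + 1 < j := by
    have : i + 1 < j := by omega
    exact_mod_cast this
  intro h; linarith

lemma term_eq (j x k : ℕ) (hk : k < j) (P Q : ℝ) :
    (j : ℝ) * (P * Q * poch (-(x:ℝ)-1) k / (poch (1/2) k * poch (-(j:ℝ)) k * (Nat.factorial k : ℝ)))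
      = ((x:ℝ)+1) * (P * Q * poch (-(x:ℝ)) k / (poch (1/2) k * poch (-(j:ℝ)+1) k * (Nat.factorial k : ℝ)))
        - ((x:ℝ) - j + 1) * (P * Q * poch (-(x:ℝ)-1) k / (poch (1/2) k * poch (-(j:ℝ)+1) k * (Nat.factorial k : ℝ))) := by
  have hC := poch_half_ne k
  have hD := poch_negj_ne j k hk.le
  have hE := poch_negj1_ne j k hk
  have hF : (Nat.factorial k : ℝ) ≠ 0 := Nat.cast_ne_zero.mpr (Nat.factorial_ne_zero k)
  have hA : (-(x:ℝ)-1) * poch (-(x:ℝ)) k = (-(x:ℝ)-1 + k) * poch (-(x:ℝ)-1) k := by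
    have := poch_shift (-(x:ℝ)-1) k
    rw [show (-(x:ℝ)-1+1) = -(x:ℝ) by ring] at this
    exact this
  have hB : (-(j:ℝ)) * poch (-(j:ℝ)+1) k = (-(j:ℝ) + k) * poch (-(j:ℝ)) k :=
    poch_shift (-(j:ℝ)) k
  field_simp
  linear_combination (P * Q) *
    ((poch (-(j:ℝ)) k) * hA - (poch (-(x:ℝ)-1) k) * hB)

theorem stmt2 (j n x : ℕ) (hj : 1 ≤ j) (hn : n ≤ j - 1) (hx : x ≤ j - 1) :
    (j : ℝ) * hyp3F2 n (n : ℝ) (-(x : ℝ) - 1) (1/2) (-(j : ℝ))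
      = ((x : ℝ) + 1) * hyp3F2 n (n : ℝ) (-(x : ℝ)) (1/2) (-(j : ℝ) + 1)
        - ((x : ℝ) - (j : ℝ) + 1) * hyp3F2 n (n : ℝ) (-(x : ℝ) - 1) (1/2) (-(j : ℝ) + 1) := by
  unfold hyp3F2
  rw [Finset.mul_sum, Finset.mul_sum, Finset.mul_sum, ← Finset.sum_sub_distrib]
  apply Finset.sum_congr rfl
  intro k hk
  simp only [Finset.mem_range] at hk
  have hkj : k < j := by omega
  exact term_eq j x k hkj _ _
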